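/- Let F : (0,∞) → (0,∞) be continuous, strictly increasing with lim_{t→∞} F(t) = ∞, let U : ℝ² → (0,∞) be measurable with lim_{|x|→∞} F(1/U(x))/|x| = 1, and let ℓ > 0. Then for every ε ∈ (0,1) there exists R > 0 such that for all x ∈ ℝ² with |x| > R, ∫_{|y| ≤ ε|x|} U(x−y) |φ₀(y)|² dy ≤ 1/F^{-1}((1−ε)²|x|), where F^{-1} denotes the inverse function of F. -/

import Mathlib

open MeasureTheory Filter Real

noncomputable section

abbrev E2 := EuclideanSpace ℝ (Fin 2)

/-- The centred Gaussian probability density `|φ₀(x)|² = (2πℓ²)⁻¹ exp(-|x|²/(2ℓ²))` on `ℝ²`. -/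
def phiSq (l : ℝ) (x : E2) : ℝ := (2 * π * l ^ 2)⁻¹ * Real.exp (-‖x‖ ^ 2 / (2 * l ^ 2))

lemma phiSq_eq (l : ℝ) (x : E2) :
    phiSq l x = (2 * π * l ^ 2)⁻¹ * Real.exp (-(2 * l ^ 2)⁻¹ * ‖x‖ ^ 2) := by
  unfold phiSq
  ring_nf

lemma phiSq_nonneg (l : ℝ) (x : E2) : 0 ≤ phiSq l x := by
  unfold phiSq
  positivity

lemma phiSq_continuous (l : ℝ) : Continuous (phiSq l) := by
  unfold phiSq
  fun_prop

lemma phiSq_integrable (l : ℝ) (hl : 0 < l) : Integrable (phiSq l) := by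
  have hb : (0 : ℝ) < (2 * l ^ 2)⁻¹ := by positivity
  have h := (GaussianFourier.integrable_cexp_neg_mul_sq_norm_add
    (b := (((2 * l ^ 2)⁻¹ : ℝ) : ℂ)) (by rw [Complex.ofReal_re]; exact hb) 0 (0 : E2)).norm
  have e : ∀ x : E2, (-((((2 * l ^ 2)⁻¹ : ℝ)) : ℂ) * (‖x‖ : ℂ) ^ 2
      + 0 * (((inner ℝ (0 : E2) x : ℝ)) : ℂ)) = ((-(2 * l ^ 2)⁻¹ * ‖x‖ ^ 2 : ℝ) : ℂ) := by
    intro x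
    push_cast
    ring
  have h2 : Integrable (fun x : E2 => Real.exp (-(2 * l ^ 2)⁻¹ * ‖x‖ ^ 2)) := by
    refine h.congr (Filter.Eventually.of_forall fun x => ?_)
    simp only [e, Complex.norm_exp_ofReal]
  have h3 := h2.const_mul ((2 * π * l ^ 2)⁻¹)
  refine h3.congr (Filter.Eventually.of_forall fun x => ?_)
  rw [phiSq_eq l]

lemma phiSq_integral (l : ℝ) (hl : 0 < l) : ∫ x : E2, phiSq l x = 1 := by
  have hb : (0 : ℝ) < (2 * l ^ 2)⁻¹ := by positivity
  have key := GaussianFourier.integral_rexp_neg_mul_sq_norm (V := E2) hb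
  simp_rw [phiSq_eq l, integral_const_mul, neg_mul] at *
  rw [key]
  have hrank : (Module.finrank ℝ E2 : ℝ) = 2 := by
    simp [finrank_euclideanSpace]
  rw [hrank]
  rw [show ((2 : ℝ) / 2 : ℝ) = 1 by norm_num, Real.rpow_one]
  have hπ : (0 : ℝ) < π := Real.pi_pos
  field_simp

set_option maxHeartbeats 1000000 in
/-- Upper bound for the inner part of the Gaussian convolution: for all sufficiently
large `|x|`, `∫_{|y| ≤ ε|x|} U(x-y)|φ₀(y)|² dy ≤ 1/F⁻¹((1-ε)²|x|)`. -/
theorem stmt_8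
    (F : ℝ → ℝ)
    (hFpos : ∀ t > 0, 0 < F t)
    (hFcont : ContinuousOn F (Set.Ioi 0))
    (hFmono : StrictMonoOn F (Set.Ioi 0))
    (hFtop : Tendsto F atTop atTop)
    (U : E2 → ℝ)
    (hUpos : ∀ x, 0 < U x)
    (hUmeas : Measurable U)
    (hUdecay : Tendsto (fun x : E2 => F (1 / U x) / ‖x‖)
      (comap (fun x : E2 => ‖x‖) atTop) (nhds 1))
    (l : ℝ) (hl : 0 < l)
    (Finv : ℝ → ℝ)
    (hFinv : ∀ t > 0, Finv (F t) = t)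
    (ε : ℝ) (hε : ε ∈ Set.Ioo (0 : ℝ) 1) :
    ∃ R > 0, ∀ x : E2, R < ‖x‖ →
      ∫ y in Metric.closedBall (0 : E2) (ε * ‖x‖), U (x - y) * phiSq l y ≤
        1 / Finv ((1 - ε) ^ 2 * ‖x‖) := by
  obtain ⟨hε0, hε1⟩ := hε
  have hδ : (0 : ℝ) < 1 - ε := by linarith
  -- extract the decay estimate
  have h1 : ∀ᶠ z : E2 in comap (fun z => ‖z‖) atTop,
      1 - ε < F (1 / U z) / ‖z‖ := hUdecay (Ioi_mem_nhds (by linarith))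
  rw [eventually_comap, eventually_atTop] at h1
  obtain ⟨M, hM⟩ := h1
  set C : ℝ := |M| + |F 1| + 1 with hC
  have hC1 : (1 : ℝ) ≤ C := by rw [hC]; linarith [abs_nonneg M, abs_nonneg (F 1)]
  refine ⟨C / (1 - ε) ^ 2, div_pos (by linarith) (by positivity), fun x hx => ?_⟩
  have hxpos : 0 < ‖x‖ := lt_of_le_of_lt (le_of_lt (div_pos (by linarith) (by positivity))) hx
  set c : ℝ := (1 - ε) ^ 2 * ‖x‖ with hc
  have hcC : C < c := by
    rw [div_lt_iff₀ (by positivity)] at hx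
    rw [hc]; linarith
  have hc0 : 0 < c := lt_of_lt_of_le (lt_of_lt_of_le zero_lt_one hC1) hcC.le
  -- find t₀ with F t₀ = c by IVT
  obtain ⟨T, hTc, hT1⟩ := ((hFtop.eventually_ge_atTop c).and (eventually_ge_atTop (1 : ℝ))).exists
  have hF1c : F 1 ≤ c := le_trans (le_trans (le_abs_self _) (by rw [hC]; linarith [abs_nonneg M])) hcC.le
  have hsub : Set.Icc (1 : ℝ) T ⊆ Set.Ioi 0 := fun t ht => lt_of_lt_of_le zero_lt_one ht.1
  obtain ⟨t₀, ht₀mem, ht₀⟩ := intermediate_value_Icc hT1 (hFcont.mono hsub) ⟨hF1c, hTc⟩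
  have ht₀pos : 0 < t₀ := lt_of_lt_of_le zero_lt_one ht₀mem.1
  have hFinvc : Finv c = t₀ := by rw [← ht₀, hFinv t₀ ht₀pos]
  -- basic inequality: c ≤ (1-ε)‖x‖
  have hcx : c ≤ (1 - ε) * ‖x‖ := by
    rw [hc]; nlinarith
  -- pointwise bound on the ball
  have hbound : ∀ y ∈ Metric.closedBall (0 : E2) (ε * ‖x‖), U (x - y) ≤ 1 / t₀ := by
    intro y hy
    rw [Metric.mem_closedBall, dist_zero_right] at hy
    have hz : (1 - ε) * ‖x‖ ≤ ‖x - y‖ := by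
      have h := norm_sub_norm_le x y
      nlinarith
    have hzc : c ≤ ‖x - y‖ := le_trans hcx hz
    have hzM : M ≤ ‖x - y‖ := le_trans (le_trans (le_abs_self M) (by rw [hC]; linarith [abs_nonneg (F 1)])) (le_trans hcC.le hzc)
    have hzpos : 0 < ‖x - y‖ := lt_of_lt_of_le hc0 hzc
    have hkey := hM ‖x - y‖ hzM (x - y) rfl
    have hFU : F t₀ < F (1 / U (x - y)) := by
      rw [ht₀]
      have h2 : (1 - ε) * ‖x - y‖ < F (1 / U (x - y)) := (lt_div_iff₀ hzpos).mp hkey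
      have h3 : c ≤ (1 - ε) * ‖x - y‖ := by nlinarith
      linarith
    have hUinv : (0 : ℝ) < 1 / U (x - y) := one_div_pos.mpr (hUpos _)
    have h1U : t₀ < 1 / U (x - y) := by
      by_contra h
      push_neg at h
      rcases eq_or_lt_of_le h with he | hlt
      · rw [he] at hFU; exact lt_irrefl _ hFU
      · exact absurd (hFmono (Set.mem_Ioi.mpr hUinv) (Set.mem_Ioi.mpr ht₀pos) hlt) (by linarith)
    have hU := hUpos (x - y)
    rw [lt_div_iff₀ hU] at h1U
    rw [le_div_iff₀ ht₀pos]
    nlinarith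
  -- integrability
  have hmeas : AEStronglyMeasurable (fun y : E2 => U (x - y) * phiSq l y) volume :=
    ((hUmeas.comp (measurable_const.sub measurable_id)).mul
      (phiSq_continuous l).measurable).aestronglyMeasurable
  have hphibd : ∀ y : E2, phiSq l y ≤ (2 * π * l ^ 2)⁻¹ := by
    intro y
    unfold phiSq
    have he : Real.exp (-‖y‖ ^ 2 / (2 * l ^ 2)) ≤ 1 := by
      rw [Real.exp_le_one_iff]
      have : (0 : ℝ) ≤ ‖y‖ ^ 2 / (2 * l ^ 2) := by positivity
      linarith [neg_div (2 * l ^ 2) (‖y‖ ^ 2)]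
    have hpos : (0 : ℝ) ≤ (2 * π * l ^ 2)⁻¹ := by positivity
    nlinarith
  have hintg : IntegrableOn (fun y : E2 => U (x - y) * phiSq l y)
      (Metric.closedBall (0 : E2) (ε * ‖x‖)) volume := by
    apply Measure.integrableOn_of_bounded (M := (1 / t₀) * (2 * π * l ^ 2)⁻¹)
      measure_closedBall_lt_top.ne hmeas
    filter_upwards [ae_restrict_mem measurableSet_closedBall] with y hy
    have h1 := hbound y hy
    have h2 := hphibd y
    have h3 := phiSq_nonneg l y
    have h4 := (hUpos (x - y)).le
    have h5 : (0 : ℝ) ≤ 1 / t₀ := by positivity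
    rw [Real.norm_eq_abs, abs_of_nonneg (mul_nonneg h4 h3)]
    nlinarith
  have hintg2 : IntegrableOn (fun y : E2 => (1 / t₀) * phiSq l y)
      (Metric.closedBall (0 : E2) (ε * ‖x‖)) volume :=
    ((phiSq_integrable l hl).const_mul _).integrableOn
  calc ∫ y in Metric.closedBall (0 : E2) (ε * ‖x‖), U (x - y) * phiSq l y
      ≤ ∫ y in Metric.closedBall (0 : E2) (ε * ‖x‖), (1 / t₀) * phiSq l y :=
        setIntegral_mono_on hintg hintg2 measurableSet_closedBall
          (fun y hy => mul_le_mul_of_nonneg_right (hbound y hy) (phiSq_nonneg l y))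
    _ = (1 / t₀) * ∫ y in Metric.closedBall (0 : E2) (ε * ‖x‖), phiSq l y :=
        integral_const_mul _ _
    _ ≤ (1 / t₀) * 1 := by
        apply mul_le_mul_of_nonneg_left _ (by positivity)
        rw [← phiSq_integral l hl]
        exact setIntegral_le_integral (phiSq_integrable l hl)
          (Filter.Eventually.of_forall (phiSq_nonneg l))
    _ = 1 / Finv c := by rw [hFinvc, mul_one]
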